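/- arXiv:1305.5353 — 2 statements merged into one kernel-verified Lean document; each statement's English description precedes it below -/
import Mathlib

section
/- Let (z_n) be a sequence in the unit disk converging to 1 non-tangentially (|1 - z_n| ≤ M(1-|z_n|) for some M and all n), and suppose (1 - z_{n+1})/(1 - z_n) → 1 as n → ∞. Then the pseudo-hyperbolic distance d(z_n, z_{n+1}) = |(z_{n+1}-z_n)/(1 - conj(z_n) z_{n+1})| tends to 0. -/
open Complex

/-- If `z n → 1` non-tangentially in the unit disk and `(1 - z (n+1))/(1 - z n) → 1`,
then the pseudo-hyperbolic step `d(z n, z (n+1))` tends to `0`. -/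
theorem step_tendsto_zero_of_nontangential
    (z : ℕ → ℂ) (M : ℝ)
    (hz : ∀ n, z n ∈ Metric.ball (0 : ℂ) 1)
    (hne : ∀ n, z n ≠ 1)
    (hlim : Filter.Tendsto z Filter.atTop (nhds 1))
    (hM : ∀ n, ‖1 - z n‖ ≤ M * (1 - ‖z n‖))
    (hratio : Filter.Tendsto (fun n => (1 - z (n + 1)) / (1 - z n))
      Filter.atTop (nhds 1)) :
    Filter.Tendsto
      (fun n => ‖(z (n + 1) - z n) / (1 - (starRingEnd ℂ) (z n) * z (n + 1))‖)
      Filter.atTop (nhds 0) := by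
  set a : ℕ → ℂ := fun n => 1 - z n with ha
  have hane : ∀ n, a n ≠ 0 := fun n => sub_ne_zero.mpr (Ne.symm (hne n))
  have habs : ∀ n, 0 < ‖a n‖ := fun n =>
    (norm_pos_iff.mpr (hane n))
  have hball : ∀ n, ‖z n‖ < 1 := by
    intro n; have := hz n; simpa [Metric.mem_ball] using this
  have hMpos : 0 < M := by
    have h1 := hM 0
    have h2 := habs 0
    have h3 := hball 0
    nlinarith
  have hre : ∀ n, ‖a n‖ ≤ M * (a n).re := by
    intro n
    have h2 : (z n).re ≤ ‖z n‖ := Complex.re_le_norm _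
    have h3 : (a n).re = 1 - (z n).re := by simp [ha]
    have h4 := hM n
    have h5 := hball n
    nlinarith
  have hrepos : ∀ n, 0 ≤ (a n).re := by
    intro n; have := hre n; have := habs n; nlinarith
  have hatend : Filter.Tendsto a Filter.atTop (nhds 0) := by
    have : Filter.Tendsto (fun n => (1 : ℂ) - z n) Filter.atTop (nhds (1 - 1)) :=
      tendsto_const_nhds.sub hlim
    simpa using this
  have hatend' : Filter.Tendsto (fun n => ‖a (n + 1)‖) Filter.atTop (nhds 0) := by
    have h1 : Filter.Tendsto (fun n => a (n + 1)) Filter.atTop (nhds 0) :=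
      hatend.comp (Filter.tendsto_add_atTop_nat 1)
    have := h1.norm
    simpa using this
  have hsmall : ∀ᶠ n in Filter.atTop, ‖a (n + 1)‖ ≤ 1 / (2 * M) := by
    have := hatend'.eventually_le_const (show (0:ℝ) < 1 / (2 * M) by positivity)
    exact this
  set r : ℕ → ℂ := fun n => a (n + 1) / a n with hr
  have hrt : Filter.Tendsto (fun n => ‖1 - r n‖) Filter.atTop (nhds 0) := by
    have h1 : Filter.Tendsto (fun n => (1 : ℂ) - r n) Filter.atTop (nhds (1 - 1)) :=
      tendsto_const_nhds.sub hratio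
    have h2 : Filter.Tendsto (fun n => (1 : ℂ) - r n) Filter.atTop (nhds 0) := by
      simpa using h1
    have := h2.norm
    simpa using this
  have hbound : ∀ᶠ n in Filter.atTop,
      ‖(z (n + 1) - z n) / (1 - (starRingEnd ℂ) (z n) * z (n + 1))‖
        ≤ 2 * M * ‖1 - r n‖ := by
    filter_upwards [hsmall] with n hn
    set D : ℂ := 1 - (starRingEnd ℂ) (z n) * z (n + 1) with hD
    have hDeq : D = a (n + 1) + (starRingEnd ℂ) (a n) * (1 - a (n + 1)) := by
      simp only [ha, hD, map_sub, map_one]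
      ring
    have hreD : ‖a n‖ / (2 * M) ≤ D.re := by
      have h1 : D.re = (a (n + 1)).re + (a n).re - ((starRingEnd ℂ) (a n) * a (n + 1)).re := by
        rw [hDeq]; simp [Complex.add_re, Complex.sub_re, Complex.mul_re]; ring
      have h2 : ((starRingEnd ℂ) (a n) * a (n + 1)).re ≤ ‖a n‖ * ‖a (n + 1)‖ := by
        calc ((starRingEnd ℂ) (a n) * a (n + 1)).re
            ≤ ‖(starRingEnd ℂ) (a n) * a (n + 1)‖ := Complex.re_le_norm _
          _ = ‖a n‖ * ‖a (n + 1)‖ := by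
              simp [map_mul]
      have h3 := hre n
      have h4 := hrepos (n + 1)
      have h5 := habs n
      rw [h1]
      have h2a : -(‖a n‖ * ‖a (n + 1)‖) ≤ ((starRingEnd ℂ) (a n) * a (n + 1)).re := by
        have := Complex.abs_re_le_norm ((starRingEnd ℂ) (a n) * a (n + 1))
        have habsmul : ‖(starRingEnd ℂ) (a n) * a (n + 1)‖ = ‖a n‖ * ‖a (n + 1)‖ := by
          simp [map_mul]
        rw [habsmul] at this
        linarith [neg_abs_le (((starRingEnd ℂ) (a n) * a (n + 1)).re)]
      have h6 : ‖a n‖ * ‖a (n + 1)‖ ≤ ‖a n‖ * (1 / (2 * M)) :=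
        mul_le_mul_of_nonneg_left hn (le_of_lt h5)
      have h7 : ‖a n‖ * (1 / (2 * M)) * (2 * M) = ‖a n‖ := by
        field_simp
      have h8 : ‖a n‖ * ‖a (n + 1)‖ * (2 * M) ≤ ‖a n‖ := by
        calc ‖a n‖ * ‖a (n + 1)‖ * (2 * M)
            ≤ ‖a n‖ * (1 / (2 * M)) * (2 * M) :=
              mul_le_mul_of_nonneg_right h6 (by positivity)
          _ = ‖a n‖ := h7
      rw [div_le_iff₀ (by positivity : (0:ℝ) < 2 * M)]
      nlinarith [mul_le_mul_of_nonneg_right h2a (by positivity : (0:ℝ) ≤ 2 * M),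
        mul_le_mul_of_nonneg_right h3 (by positivity : (0:ℝ) ≤ 2 * M),
        mul_nonneg h4 (by positivity : (0:ℝ) ≤ 2 * M)]
    have hDpos : 0 < ‖D‖ := by
      have := Complex.re_le_norm D
      have := habs n
      have : 0 < ‖a n‖ / (2 * M) := by positivity
      nlinarith [Complex.re_le_norm D]
    have hnum : z (n + 1) - z n = a n * (1 - r n) := by
      have : a n * (1 - r n) = a n - a (n + 1) := by
        simp only [hr]; rw [mul_sub, mul_one, mul_div_cancel₀ _ (hane n)]
      rw [this]; simp [ha]
    rw [norm_div, hnum, norm_mul]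
    rw [div_le_iff₀ hDpos]
    have ht : 0 ≤ ‖1 - r n‖ := norm_nonneg _
    have hDge : ‖a n‖ / (2 * M) ≤ ‖D‖ :=
      le_trans hreD (Complex.re_le_norm D)
    rw [div_le_iff₀ (by positivity : (0:ℝ) < 2 * M)] at hDge
    nlinarith [habs n, mul_le_mul_of_nonneg_right hDge ht]
  have hg : Filter.Tendsto (fun n => 2 * M * ‖1 - r n‖) Filter.atTop (nhds 0) := by
    have := hrt.const_mul (2 * M)
    simpa using this
  exact squeeze_zero' (Filter.Eventually.of_forall fun n => norm_nonneg _) hbound hg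
end

section
/- Let (Z_n) be a sequence in B^N converging to X ∈ ∂B^N that is special (‖Z_n - ⟨Z_n,X⟩X‖²/(1-|⟨Z_n,X⟩|²) → 0) and lies in a Koranyi region K(X,M) = {Z ∈ B^N : |1-⟨Z,X⟩|/(1-‖Z‖) < M} for some M > 1. Then the projections z_n = ⟨Z_n,X⟩ converge to 1 non-tangentially in the unit disk, i.e., |1-z_n|/(1-|z_n|) is bounded. -/
open Complex

/-- If a special sequence in the unit ball of `ℂ^N` converging to a boundary point
`X` lies in a Koranyi region `K(X,M)`, then its projections `z n = ⟨Z n, X⟩`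
converge to `1` non-tangentially in the unit disk. -/
theorem special_koranyi_projection_nontangential (N : ℕ)
    (Z : ℕ → EuclideanSpace ℂ (Fin N)) (X : EuclideanSpace ℂ (Fin N)) (M : ℝ)
    (hX : ‖X‖ = 1) (hM : 1 < M)
    (hball : ∀ n, ‖Z n‖ < 1)
    (hlim : Filter.Tendsto Z Filter.atTop (nhds X))
    (hspecial : Filter.Tendsto
      (fun n => ‖Z n - (inner ℂ X (Z n) : ℂ) • X‖ ^ 2 /
        (1 - (‖(inner ℂ X (Z n) : ℂ)‖) ^ 2)) Filter.atTop (nhds 0))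
    (hKoranyi : ∀ n, ‖1 - (inner ℂ X (Z n) : ℂ)‖ < M * (1 - ‖Z n‖)) :
    ∃ C : ℝ, ∀ n,
      ‖1 - (inner ℂ X (Z n) : ℂ)‖ ≤
        C * (1 - ‖(inner ℂ X (Z n) : ℂ)‖) := by
  refine ⟨M, fun n => ?_⟩
  have h1 : ‖(inner ℂ X (Z n) : ℂ)‖ ≤ ‖Z n‖ := by
    have := norm_inner_le_norm (𝕜 := ℂ) X (Z n)
    simpa [hX] using this
  have h2 : 1 - ‖Z n‖ ≤ 1 - ‖(inner ℂ X (Z n) : ℂ)‖ := by linarith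
  have hM0 : (0:ℝ) ≤ M := by linarith
  calc ‖1 - (inner ℂ X (Z n) : ℂ)‖ ≤ M * (1 - ‖Z n‖) := (hKoranyi n).le
    _ ≤ M * (1 - ‖(inner ℂ X (Z n) : ℂ)‖) := by
        exact mul_le_mul_of_nonneg_left h2 hM0
end
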